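/- Let n ∈ ℕ, let a = (a_1, ..., a_n) : I → ℝ^n be twice continuously differentiable, and let f : I → ℝ^n be a fundamental system of solutions of y^{(n)} = a_1 y^{(n-1)} + ... + a_n y. Then for every j ∈ {0, ..., n−1}, one has on I: W_f^{(n+2, n−1, ..., j+1, j−1, ..., 1, 0)} = (−1)^{n−j−1} · W_f · (a_1² a_{n−j} + a_1 a_{n−j+1} + a_2 a_{n−j} + a_{n−j+2} + a_1 a_{n−j}' + 2 a_1' a_{n−j} + 2 a_{n−j+1}' + a_{n−j}''), where a_{n+1} := a_{n+2} := 0 and the multi-index consists of n+2 followed by the integers n−1 down to 0 with j omitted. -/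

import Mathlib

open Matrix

/-- Noncommutative complete Bell polynomials: `B_0 = I_n`,
`B_{m+1}(X_1,…,X_{m+1}) = ∑_{j=0}^m C(m,j) B_j(X_1,…,X_j) X_{m+1-j}`.
Here `X : Fin m → _` with `X i` playing the role of `X_{i+1}`. -/
noncomputable def Bell {n : ℕ} :
    (m : ℕ) → (Fin m → Matrix (Fin n) (Fin n) ℝ) → Matrix (Fin n) (Fin n) ℝ
  | 0, _ => 1
  | m + 1, X => ∑ j : Fin (m + 1),
      (Nat.choose m (j : ℕ) : ℝ) •
        (Bell (j : ℕ) (fun i : Fin (j : ℕ) => X (Fin.castLE (by omega) i)) *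
          X ⟨m - (j : ℕ), by omega⟩)

/-- Entrywise `k`-th derivative (within `I`) of a matrix-valued function. -/
noncomputable def matD {n : ℕ} (I : Set ℝ) (X : ℝ → Matrix (Fin n) (Fin n) ℝ) (k : ℕ)
    (x : ℝ) : Matrix (Fin n) (Fin n) ℝ :=
  Matrix.of fun p q => iteratedDerivWithin k (fun t => X t p q) I x

/-- `B_j(X, X', …, X^{(j-1)})` evaluated at `x` (derivatives within `I`). -/
noncomputable def BellD {n : ℕ} (I : Set ℝ) (X : ℝ → Matrix (Fin n) (Fin n) ℝ) (j : ℕ)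
    (x : ℝ) : Matrix (Fin n) (Fin n) ℝ :=
  Bell j (fun i : Fin j => matD I X (i : ℕ) x)

/-- Generalized Wronskian `W_f^k = det(f^{(k_1)} | … | f^{(k_n)})` (derivatives within `I`). -/
noncomputable def genW {n : ℕ} (I : Set ℝ) (f : ℝ → Fin n → ℝ) (k : Fin n → ℕ) (x : ℝ) : ℝ :=
  Matrix.det (Matrix.of fun p q => iteratedDerivWithin (k q) (fun t => f t p) I x)

/-- The multi-index `(n-1, n-2, …, 1, 0)` of the ordinary Wronskian. -/
def wIdx (n : ℕ) : Fin n → ℕ := fun q => n - 1 - (q : ℕ)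

/-- The multi-index `(n+d, n-1, …, j+1, j-1, …, 1, 0)`. -/
def dIdx (n d j : ℕ) : Fin n → ℕ :=
  fun q => if (q : ℕ) = 0 then n + d
    else if j < n - (q : ℕ) then n - (q : ℕ) else n - (q : ℕ) - 1

/-- `Φ_f^{[j]} = (-1)^{n-j-1} W_f^{(n,n-1,…,j+1,j-1,…,0)} / W_f`. -/
noncomputable def Phi {n : ℕ} (I : Set ℝ) (f : ℝ → Fin n → ℝ) (j : ℕ) (x : ℝ) : ℝ :=
  (-1 : ℝ) ^ (n - j - 1) * genW I f (dIdx n 0 j) x / genW I f (wIdx n) x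

/-- The `1`-indexed standard basis vector `e_i` of `ℝ^n`. -/
def stdB (n i : ℕ) : Fin n → ℝ := fun p => if (p : ℕ) + 1 = i then 1 else 0

/-- The matrix `X_a = (a | e_1 | … | e_{n-1})`. -/
def colMat {n : ℕ} (a : ℝ → Fin n → ℝ) (x : ℝ) : Matrix (Fin n) (Fin n) ℝ :=
  Matrix.of fun p q =>
    if (q : ℕ) = 0 then a x p else if (p : ℕ) + 1 = (q : ℕ) then 1 else 0

/-- The matrix `Y_f = (f^{(n-1)} | … | f' | f)` (derivatives within `I`). -/
noncomputable def Yfun {n : ℕ} (I : Set ℝ) (f : ℝ → Fin n → ℝ) (x : ℝ) :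
    Matrix (Fin n) (Fin n) ℝ :=
  Matrix.of fun p q => iteratedDerivWithin (n - 1 - (q : ℕ)) (fun t => f t p) I x

/-- The `1`-indexed component `a_i` of `a : I → ℝ^n`, with `a_i := 0` for `i > n`. -/
noncomputable def aExt {n : ℕ} (a : ℝ → Fin n → ℝ) (i : ℕ) : ℝ → ℝ :=
  fun t => if h : i - 1 < n then a t ⟨i - 1, h⟩ else 0

/-- `y` is an `n`-times differentiable (on `I`) solution of
`y^{(n)} = a_1 y^{(n-1)} + ⋯ + a_n y`, where `a i` is `a_{i+1}`. -/
def SolvesDE {n : ℕ} (I : Set ℝ) (a : ℝ → Fin n → ℝ) (y : ℝ → ℝ) : Prop :=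
  (∀ k < n, DifferentiableOn ℝ (iteratedDerivWithin k y I) I) ∧
    ∀ x ∈ I, iteratedDerivWithin n y I x =
      ∑ i : Fin n, a x i * iteratedDerivWithin (n - 1 - (i : ℕ)) y I x

/-- `f : I → ℝ^n` is a fundamental system of solutions of
`y^{(n)} = a_1 y^{(n-1)} + ⋯ + a_n y`: each component solves the equation and the
components are linearly independent functions on `I`. -/
def FundSystem {n : ℕ} (I : Set ℝ) (a : ℝ → Fin n → ℝ) (f : ℝ → Fin n → ℝ) : Prop :=
  (∀ p : Fin n, SolvesDE I a fun t => f t p) ∧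
    LinearIndependent ℝ fun p : Fin n => I.restrict fun t => f t p

section Aux
open Set

lemma idwo {s : Set ℝ} (hs : IsOpen s) {x : ℝ} (hx : x ∈ s) (k : ℕ) (g : ℝ → ℝ) :
    iteratedDerivWithin k g s x = iteratedDeriv k g x := by
  simp only [iteratedDerivWithin, iteratedDeriv, iteratedFDerivWithin_of_isOpen k hs hx]

noncomputable def shiftC (m : ℕ) (a : ℝ → Fin (m+1) → ℝ) (c : Fin (m+1) → ℝ → ℝ) :
    Fin (m+1) → ℝ → ℝ :=
  fun i t => deriv (c i) t + c 0 t * a t i +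
    (if h : (i : ℕ) + 1 < m + 1 then c ⟨(i : ℕ) + 1, h⟩ t else 0)

lemma key_step {m : ℕ} {I : Set ℝ} (hIo : IsOpen I) {a : ℝ → Fin (m+1) → ℝ}
    {y : ℝ → ℝ} (hy : SolvesDE I a y)
    {c : Fin (m+1) → ℝ → ℝ} (hc : ∀ i, DifferentiableOn ℝ (c i) I)
    {x : ℝ} (hx : x ∈ I) :
    deriv (fun t => ∑ i, c i t * iteratedDeriv (m - (i : ℕ)) y t) x
      = ∑ i, shiftC m a c i x * iteratedDeriv (m - (i : ℕ)) y x := by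
  have hyk : ∀ k ≤ m, DifferentiableOn ℝ (iteratedDeriv k y) I := fun k hk =>
    (hy.1 k (by omega)).congr fun t ht => (idwo hIo ht k y).symm
  have hyAt : ∀ k ≤ m, DifferentiableAt ℝ (iteratedDeriv k y) x := fun k hk =>
    (hyk k hk).differentiableAt (hIo.mem_nhds hx)
  have hcAt : ∀ i, DifferentiableAt ℝ (c i) x := fun i =>
    (hc i).differentiableAt (hIo.mem_nhds hx)
  have htop : iteratedDeriv (m+1) y x = ∑ i, a x i * iteratedDeriv (m - (i : ℕ)) y x := by
    have h2 := hy.2 x hx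
    simp only [Nat.add_sub_cancel, idwo hIo hx] at h2
    exact h2
  have hstep1 : deriv (fun t => ∑ i, c i t * iteratedDeriv (m - (i : ℕ)) y t) x
      = ∑ i, (deriv (c i) x * iteratedDeriv (m - (i : ℕ)) y x
          + c i x * iteratedDeriv (m - (i : ℕ) + 1) y x) := by
    rw [deriv_fun_sum (A := fun i t => c i t * iteratedDeriv (m - (i : ℕ)) y t) (fun i _ => ((hcAt i).mul (hyAt _ (by omega))))]
    refine Finset.sum_congr rfl fun i _ => ?_
    rw [deriv_fun_mul (hcAt i) (hyAt _ (by omega)), iteratedDeriv_succ]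
  rw [hstep1]
  have hsplit : ∑ i : Fin (m+1), c i x * iteratedDeriv (m - (i : ℕ) + 1) y x
      = ∑ i : Fin (m+1), (c 0 x * a x i
          + (if h : (i : ℕ) + 1 < m + 1 then c ⟨(i : ℕ) + 1, h⟩ x else 0))
            * iteratedDeriv (m - (i : ℕ)) y x := by
    rw [Fin.sum_univ_succ]
    simp only [Fin.val_zero, Nat.sub_zero, htop, Finset.mul_sum, add_mul]
    rw [Finset.sum_add_distrib]
    congr 1
    · refine Finset.sum_congr rfl fun i _ => ?_; ring
    · rw [Fin.sum_univ_castSucc]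
      have hlast : (if h : (Fin.last m : ℕ) + 1 < m + 1 then
          c ⟨(Fin.last m : ℕ) + 1, h⟩ x else 0) = 0 := by
        rw [dif_neg]; simp [Fin.last]
      rw [hlast, zero_mul, add_zero]
      refine Finset.sum_congr rfl fun i _ => ?_
      have h1 : (i.castSucc : ℕ) + 1 < m + 1 := by
        simp only [Fin.coe_castSucc]; omega
      rw [dif_pos h1]
      have h2 : (⟨(i.castSucc : ℕ) + 1, h1⟩ : Fin (m+1)) = i.succ := by
        simp [Fin.ext_iff]
      have h3 : m - ((i.succ : Fin (m+1)) : ℕ) + 1 = m - (i.castSucc : ℕ) := by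
        simp only [Fin.val_succ, Fin.coe_castSucc]; omega
      rw [h2, h3]
  rw [Finset.sum_add_distrib, hsplit, ← Finset.sum_add_distrib]
  refine Finset.sum_congr rfl fun i _ => ?_
  simp only [shiftC]; ring

lemma top3 {m : ℕ} {I : Set ℝ} (hIo : IsOpen I) {a : ℝ → Fin (m+1) → ℝ}
    (ha : ∀ i, ContDiffOn ℝ 2 (fun t => a t i) I)
    {y : ℝ → ℝ} (hy : SolvesDE I a y) {x : ℝ} (hx : x ∈ I) :
    iteratedDeriv (m+3) y x
      = ∑ i, shiftC m a (shiftC m a (fun i t => a t i)) i x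
          * iteratedDeriv (m - (i : ℕ)) y x := by
  set a0 : Fin (m+1) → ℝ → ℝ := fun i t => a t i with ha0
  have ha1 : ∀ i, DifferentiableOn ℝ (a0 i) I := fun i =>
    (ha i).differentiableOn two_ne_zero
  have hd : ∀ i, DifferentiableOn ℝ (shiftC m a a0 i) I := by
    intro i
    have h1 : DifferentiableOn ℝ (deriv (a0 i)) I :=
      ((ha i).deriv_of_isOpen hIo (m := 1) (by norm_num)).differentiableOn one_ne_zero
    refine (h1.add ((ha1 0).mul (ha1 i))).add ?_
    by_cases h : (i : ℕ) + 1 < m + 1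
    · simpa only [dif_pos h] using ha1 ⟨(i : ℕ) + 1, h⟩
    · simpa only [dif_neg h] using differentiableOn_const (0 : ℝ)
  have heq1 : Set.EqOn (iteratedDeriv (m+1) y)
      (fun t => ∑ i, a0 i t * iteratedDeriv (m - (i : ℕ)) y t) I := by
    intro t ht
    have h2 := hy.2 t ht
    simp only [Nat.add_sub_cancel, idwo hIo ht] at h2
    exact h2
  have heq2 : Set.EqOn (iteratedDeriv (m+2) y)
      (fun t => ∑ i, shiftC m a a0 i t * iteratedDeriv (m - (i : ℕ)) y t) I := by
    intro t ht
    have h1 : iteratedDeriv (m+2) y t = deriv (iteratedDeriv (m+1) y) t :=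
      congrFun (iteratedDeriv_succ) t
    rw [h1, Filter.EventuallyEq.deriv_eq (heq1.eventuallyEq_of_mem (hIo.mem_nhds ht))]
    exact key_step hIo hy ha1 ht
  have h1 : iteratedDeriv (m+3) y x = deriv (iteratedDeriv (m+2) y) x :=
    congrFun (iteratedDeriv_succ) x
  rw [h1, Filter.EventuallyEq.deriv_eq (heq2.eventuallyEq_of_mem (hIo.mem_nhds hx))]
  exact key_step hIo hy hd hx

noncomputable def Aex (m : ℕ) (a : ℝ → Fin (m+1) → ℝ) (k : ℕ) : ℝ → ℝ :=
  fun t => if h : k < m + 1 then a t ⟨k, h⟩ else 0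

lemma Aex_fin {m : ℕ} (a : ℝ → Fin (m+1) → ℝ) (k : Fin (m+1)) :
    (fun t => a t k) = Aex m a (k : ℕ) := by
  funext t; simp [Aex]; intro h; exact absurd k.isLt (by omega)

lemma Aex_big {m : ℕ} (a : ℝ → Fin (m+1) → ℝ) {k : ℕ} (h : ¬ k < m + 1) :
    Aex m a k = fun _ => 0 := funext fun t => dif_neg h

lemma dEq {m : ℕ} (a : ℝ → Fin (m+1) → ℝ) (i : Fin (m+1)) :
    shiftC m a (fun i t => a t i) i
      = fun t => deriv (Aex m a (i : ℕ)) t + Aex m a 0 t * Aex m a (i : ℕ) t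
          + Aex m a ((i : ℕ) + 1) t := by
  funext t
  show deriv (fun t => a t i) t + a t 0 * a t i
      + (if h : (i : ℕ) + 1 < m + 1 then a t ⟨(i : ℕ) + 1, h⟩ else 0) = _
  rw [Aex_fin a i]
  have e0 : Aex m a 0 t = a t 0 := by simp [Aex]
  have ei : Aex m a (i : ℕ) t = a t i := by simp [Aex]; intro h; exact absurd i.isLt (by omega)
  have ei1 : Aex m a ((i : ℕ) + 1) t
      = (if h : (i : ℕ) + 1 < m + 1 then a t ⟨(i : ℕ) + 1, h⟩ else 0) := by simp only [Aex]
  rw [e0, ei, ei1]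

lemma AexD {m : ℕ} {I : Set ℝ} (hIo : IsOpen I) {a : ℝ → Fin (m+1) → ℝ}
    (ha : ∀ i, ContDiffOn ℝ 2 (fun t => a t i) I) (k : ℕ) :
    DifferentiableOn ℝ (Aex m a k) I ∧ DifferentiableOn ℝ (deriv (Aex m a k)) I := by
  by_cases h : k < m + 1
  · have he : Aex m a k = fun t => a t ⟨k, h⟩ := by
      funext t; simp [Aex, h]
    rw [he]
    exact ⟨(ha ⟨k, h⟩).differentiableOn two_ne_zero,
      ((ha ⟨k, h⟩).deriv_of_isOpen hIo (m := 1) (by norm_num)).differentiableOn one_ne_zero⟩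
  · rw [Aex_big a h, deriv_const']
    exact ⟨differentiableOn_const 0, differentiableOn_const 0⟩

lemma coeff_eq {m : ℕ} {I : Set ℝ} (hIo : IsOpen I) {a : ℝ → Fin (m+1) → ℝ}
    (ha : ∀ i, ContDiffOn ℝ 2 (fun t => a t i) I) (i : Fin (m+1)) {x : ℝ} (hx : x ∈ I) :
    shiftC m a (shiftC m a (fun i t => a t i)) i x =
      Aex m a 0 x ^ 2 * Aex m a (i : ℕ) x + Aex m a 0 x * Aex m a ((i : ℕ) + 1) x +
      Aex m a 1 x * Aex m a (i : ℕ) x + Aex m a ((i : ℕ) + 2) x +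
      Aex m a 0 x * deriv (Aex m a (i : ℕ)) x + 2 * deriv (Aex m a 0) x * Aex m a (i : ℕ) x +
      2 * deriv (Aex m a ((i : ℕ) + 1)) x + deriv (deriv (Aex m a (i : ℕ))) x := by
  have hAt : ∀ k, DifferentiableAt ℝ (Aex m a k) x :=
    fun k => (AexD hIo ha k).1.differentiableAt (hIo.mem_nhds hx)
  have hAt' : ∀ k, DifferentiableAt ℝ (deriv (Aex m a k)) x :=
    fun k => (AexD hIo ha k).2.differentiableAt (hIo.mem_nhds hx)
  have hderiv_d : deriv (shiftC m a (fun i t => a t i) i) x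
      = deriv (deriv (Aex m a (i : ℕ))) x
        + (deriv (Aex m a 0) x * Aex m a (i : ℕ) x + Aex m a 0 x * deriv (Aex m a (i : ℕ)) x)
        + deriv (Aex m a ((i : ℕ) + 1)) x := by
    rw [dEq a i]
    rw [deriv_fun_add (f := fun t => deriv (Aex m a (i : ℕ)) t + Aex m a 0 t * Aex m a (i : ℕ) t) ((hAt' _).add ((hAt 0).mul (hAt _))) (hAt _)]
    rw [deriv_fun_add (g := fun t => Aex m a 0 t * Aex m a (i : ℕ) t) (hAt' _) ((hAt 0).mul (hAt _))]
    rw [deriv_fun_mul (hAt 0) (hAt _)]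
  have hd0 : shiftC m a (fun i t => a t i) 0 x
      = deriv (Aex m a 0) x + Aex m a 0 x * Aex m a 0 x + Aex m a 1 x := by
    rw [dEq a 0]; norm_num
  have hlast : (if h : (i : ℕ) + 1 < m + 1 then
        shiftC m a (fun i t => a t i) ⟨(i : ℕ) + 1, h⟩ x else 0)
      = deriv (Aex m a ((i : ℕ) + 1)) x + Aex m a 0 x * Aex m a ((i : ℕ) + 1) x
        + Aex m a ((i : ℕ) + 2) x := by
    by_cases h : (i : ℕ) + 1 < m + 1
    · rw [dif_pos h, dEq a ⟨(i : ℕ) + 1, h⟩]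
    · rw [dif_neg h]
      have h1 : ¬ (i : ℕ) + 2 < m + 1 := by omega
      rw [Aex_big a h, Aex_big a h1, deriv_const']
      simp
  have hmain : shiftC m a (shiftC m a (fun i t => a t i)) i x
      = deriv (shiftC m a (fun i t => a t i) i) x
        + shiftC m a (fun i t => a t i) 0 x * a x i
        + (if h : (i : ℕ) + 1 < m + 1 then
            shiftC m a (fun i t => a t i) ⟨(i : ℕ) + 1, h⟩ x else 0) := rfl
  rw [hmain, hderiv_d, hd0, hlast,
    show a x i = Aex m a (i : ℕ) x from congrFun (Aex_fin a i) x]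
  ring

lemma sigma_val (m j : ℕ) (hj : j ≤ m) (i0 : Fin (m+1)) (hi0 : i0 = ⟨m - j, by omega⟩) :
    ∀ q : Fin (m+1), (((Fin.cycleRange i0)⁻¹ : Equiv.Perm (Fin (m+1))) q : ℕ)
      = if (q : ℕ) = 0 then m - j
        else if j < m + 1 - (q : ℕ) then (q : ℕ) - 1 else (q : ℕ) := by
  have hσeq : ∀ (r q : Fin (m+1)), Fin.cycleRange i0 r = q →
      ((Fin.cycleRange i0)⁻¹ : Equiv.Perm (Fin (m+1))) q = r := by
    intro r q h; rw [← h]; exact Equiv.symm_apply_apply _ _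
  intro q
  by_cases h0 : (q : ℕ) = 0
  · have hq0 : q = 0 := Fin.ext h0
    rw [hσeq i0 q (by rw [hq0]; exact Fin.cycleRange_self i0)]
    simp [hi0, h0]
  · by_cases h1 : j < m + 1 - (q : ℕ)
    · have hqm : (q : ℕ) ≤ m := by omega
      have hr : Fin.cycleRange i0 ⟨(q : ℕ) - 1, by omega⟩ = q := by
        have hlt : (⟨(q : ℕ) - 1, by omega⟩ : Fin (m+1)) < i0 := by
          rw [Fin.lt_def, hi0]; simp; omega
        apply Fin.ext
        rw [Fin.coe_cycleRange_of_lt hlt]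
        simp; omega
      rw [hσeq _ q hr]
      simp [h0, h1]
    · have hr : Fin.cycleRange i0 q = q := by
        apply Fin.cycleRange_of_gt
        rw [Fin.lt_def, hi0]; simp; omega
      rw [hσeq _ q hr]
      simp [h0, h1]


end Aux

/-- for a fundamental system `f` with twice continuously differentiable `a`,
`W_f^{(n+2,n-1,…,j+1,j-1,…,0)} = (-1)^{n-j-1} W_f (a_1² a_{n-j} + a_1 a_{n-j+1} + a_2 a_{n-j}
+ a_{n-j+2} + a_1 a_{n-j}' + 2 a_1' a_{n-j} + 2 a_{n-j+1}' + a_{n-j}'')` on `I` for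
`0 ≤ j ≤ n-1`, where `a_{n+1} := a_{n+2} := 0`. -/
theorem stmt_9 (n : ℕ) (hn : 0 < n) (I : Set ℝ) (hIo : IsOpen I) (hIne : I.Nonempty)
    (hIc : I.OrdConnected) (a f : ℝ → Fin n → ℝ)
    (ha : ∀ i : Fin n, ContDiffOn ℝ 2 (fun t => a t i) I)
    (hf : FundSystem I a f) :
    ∀ j < n, ∀ x ∈ I,
      genW I f (dIdx n 2 j) x =
        (-1 : ℝ) ^ (n - j - 1) * genW I f (wIdx n) x *
          (aExt a 1 x ^ 2 * aExt a (n - j) x + aExt a 1 x * aExt a (n - j + 1) x +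
            aExt a 2 x * aExt a (n - j) x + aExt a (n - j + 2) x +
            aExt a 1 x * derivWithin (aExt a (n - j)) I x +
            2 * derivWithin (aExt a 1) I x * aExt a (n - j) x +
            2 * derivWithin (aExt a (n - j + 1)) I x +
            iteratedDerivWithin 2 (aExt a (n - j)) I x) := by
  obtain ⟨m, rfl⟩ : ∃ m, n = m + 1 := ⟨n - 1, by omega⟩
  intro j hj x hx
  have hj' : j ≤ m := by omega
  set W' : Matrix (Fin (m+1)) (Fin (m+1)) ℝ :=
    Matrix.of fun q p => iteratedDeriv (m - (q : ℕ)) (fun t => f t p) x with hW'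
  have hW : genW I f (wIdx (m+1)) x = W'.det := by
    rw [genW, ← Matrix.det_transpose]
    congr 1
    ext q p
    simp only [Matrix.transpose_apply, Matrix.of_apply, hW', wIdx, Nat.add_sub_cancel]
    exact idwo hIo hx _ _
  set i0 : Fin (m+1) := ⟨m - j, by omega⟩ with hi0
  set σ : Equiv.Perm (Fin (m+1)) := (Fin.cycleRange i0)⁻¹ with hσdef
  have hσ : ∀ q : Fin (m+1), (σ q : ℕ)
      = if (q : ℕ) = 0 then m - j
        else if j < m + 1 - (q : ℕ) then (q : ℕ) - 1 else (q : ℕ) :=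
    sigma_val m j hj' i0 hi0
  have hσ0 : σ 0 = i0 := by
    apply Fin.ext
    rw [hσ 0]
    simp [hi0]
  have hAM : ∀ q : Fin (m+1), (q : ℕ) ≠ 0 → dIdx (m+1) 2 j q = m - (σ q : ℕ) := by
    intro q hq
    rw [hσ q, dIdx]
    simp only [hq, if_false]
    have hqm : (q : ℕ) ≤ m := by omega
    split_ifs <;> omega
  have hrow : (fun p => iteratedDeriv (m+3) (fun t => f t p) x)
      = ∑ q, shiftC m a (shiftC m a (fun i t => a t i)) (σ q) x • (W'.submatrix σ id q) := by
    funext p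
    rw [Finset.sum_apply]
    simp only [Pi.smul_apply, smul_eq_mul, Matrix.submatrix_apply, id_eq, hW', Matrix.of_apply]
    rw [top3 hIo ha (hf.1 p) hx,
      ← Equiv.sum_comp σ (fun i => shiftC m a (shiftC m a (fun i t => a t i)) i x
        * iteratedDeriv (m - (i : ℕ)) (fun t => f t p) x)]
  have hdet : genW I f (dIdx (m+1) 2 j) x
      = shiftC m a (shiftC m a (fun i t => a t i)) i0 x * ((W'.submatrix σ id).det) := by
    rw [genW, ← Matrix.det_transpose]
    have hNmat : (Matrix.of fun p q =>
          iteratedDerivWithin (dIdx (m+1) 2 j q) (fun t => f t p) I x)ᵀ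
        = (W'.submatrix σ id).updateRow 0
            (∑ q, shiftC m a (shiftC m a (fun i t => a t i)) (σ q) x • (W'.submatrix σ id q)) := by
      ext q p
      by_cases hq : q = 0
      · subst hq
        rw [Matrix.updateRow_self, ← hrow]
        simp only [Matrix.transpose_apply, Matrix.of_apply]
        rw [idwo hIo hx]
        have : dIdx (m+1) 2 j 0 = m + 3 := by simp [dIdx]
        rw [this]
      · rw [Matrix.updateRow_ne hq]
        simp only [Matrix.transpose_apply, Matrix.of_apply, Matrix.submatrix_apply, id_eq, hW']
        rw [idwo hIo hx, hAM q (fun h => hq (Fin.ext h))]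
    rw [hNmat, Matrix.det_updateRow_sum, hσ0, smul_eq_mul]
  have hsign : (W'.submatrix σ id).det = (-1 : ℝ) ^ (m - j) * W'.det := by
    rw [hσdef, Matrix.det_permute, map_inv, Fin.sign_cycleRange]
    simp [hi0]
  have hcoef := coeff_eq hIo ha i0 hx
  have hival : (i0 : ℕ) = m - j := rfl
  have c1 : aExt a 1 = Aex m a 0 := by
    funext t; simp [aExt, Aex]
  have c2 : aExt a 2 = Aex m a 1 := by
    funext t; norm_num [aExt, Aex]
  have c3 : aExt a (m + 1 - j) = Aex m a (m - j) := by
    funext t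
    have h : m + 1 - j - 1 = m - j := by omega
    simp only [aExt, Aex, h]
  have c4 : aExt a (m + 1 - j + 1) = Aex m a (m - j + 1) := by
    funext t
    have h : m + 1 - j + 1 - 1 = m - j + 1 := by omega
    simp only [aExt, Aex, h]
  have c5 : aExt a (m + 1 - j + 2) = Aex m a (m - j + 2) := by
    funext t
    have h : m + 1 - j + 2 - 1 = m - j + 2 := by omega
    simp only [aExt, Aex, h]
  have hpow : m + 1 - j - 1 = m - j := by omega
  have hd2 : iteratedDerivWithin 2 (aExt a (m + 1 - j)) I x
      = deriv (deriv (Aex m a (m - j))) x := by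
    rw [c3, idwo hIo hx]
    simp [iteratedDeriv_succ, iteratedDeriv_one]
  rw [hdet, hsign, hW, hcoef, hival, hpow, c1, c2, c3, c4, c5,
    derivWithin_of_isOpen hIo hx, derivWithin_of_isOpen hIo hx,
    derivWithin_of_isOpen hIo hx, idwo hIo hx,
    show iteratedDeriv 2 (Aex m a (m - j)) x = deriv (deriv (Aex m a (m - j))) x by
      simp [iteratedDeriv_succ, iteratedDeriv_one]]
  ring
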